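/- Let A be a finite brace of order p^n (p prime) whose additive group is cyclic, identified with ℤ/p^n, with multiplication a∘b = a + b + p^k a b for some k ∈ ℕ. Then for z ∈ A, the map λ_z : b ↦ -z + z∘b = b + p^k z b is an automorphism of the multiplicative group (A,∘) if and only if k = 0, or 2k ≥ n, or p^{n-2k} divides z. -/
import Mathlib

lemma stmt19_aux (p n k : ℕ) (hp : p.Prime)
    (hgroup : ∀ a : ZMod (p ^ n), IsUnit (1 + (p : ZMod (p ^ n)) ^ k * a))
    (z : ZMod (p ^ n)) :
    (p : ZMod (p ^ n)) ^ (2 * k) * z = 0 ↔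
      (k = 0 ∨ n ≤ 2 * k ∨ (p : ZMod (p ^ n)) ^ (n - 2 * k) ∣ z) := by
  haveI : NeZero (p ^ n) := ⟨pow_ne_zero _ hp.pos.ne'⟩
  have hpn : ((p : ZMod (p ^ n))) ^ n = 0 := by
    have := ZMod.natCast_self (p ^ n)
    push_cast at this
    exact this
  constructor
  · intro h
    by_cases hn : n ≤ 2 * k
    · exact Or.inr (Or.inl hn)
    · push_neg at hn
      refine Or.inr (Or.inr ?_)
      have hz : ((p ^ (2 * k) * z.val : ℕ) : ZMod (p ^ n)) = 0 := by
        push_cast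
        rw [ZMod.natCast_val, ZMod.cast_id]
        exact h
      rw [ZMod.natCast_eq_zero_iff] at hz
      have hdvd : p ^ (n - 2 * k) ∣ z.val := by
        have h2 : p ^ (2 * k) * p ^ (n - 2 * k) ∣ p ^ (2 * k) * z.val := by
          rwa [← pow_add, Nat.add_sub_cancel' hn.le]
        exact (mul_dvd_mul_iff_left (pow_ne_zero (2 * k) hp.pos.ne')).mp h2
      obtain ⟨w, hw⟩ := hdvd
      refine ⟨(w : ZMod (p ^ n)), ?_⟩
      have : z = ((z.val : ℕ) : ZMod (p ^ n)) := by
        rw [ZMod.natCast_val, ZMod.cast_id]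
      rw [this, hw]
      push_cast
      ring
  · rintro (hk | hn | ⟨w, hw⟩)
    · subst hk
      have h0 := hgroup (-1)
      simp only [pow_zero, one_mul, add_neg_cancel, isUnit_zero_iff] at h0
      have : Subsingleton (ZMod (p ^ n)) := subsingleton_of_zero_eq_one h0
      exact Subsingleton.elim _ _
    · have : (p : ZMod (p ^ n)) ^ (2 * k) = 0 := by
        calc (p : ZMod (p ^ n)) ^ (2 * k)
            = (p : ZMod (p ^ n)) ^ n * (p : ZMod (p ^ n)) ^ (2 * k - n) := by
              rw [← pow_add, Nat.add_sub_cancel' hn]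
          _ = 0 := by rw [hpn, zero_mul]
      rw [this, zero_mul]
    · by_cases hn : n ≤ 2 * k
      · have : (p : ZMod (p ^ n)) ^ (2 * k) = 0 := by
          calc (p : ZMod (p ^ n)) ^ (2 * k)
              = (p : ZMod (p ^ n)) ^ n * (p : ZMod (p ^ n)) ^ (2 * k - n) := by
                rw [← pow_add, Nat.add_sub_cancel' hn]
            _ = 0 := by rw [hpn, zero_mul]
        rw [this, zero_mul]
      · push_neg at hn
        rw [hw, ← mul_assoc, ← pow_add, Nat.add_sub_cancel' hn.le, hpn, zero_mul]

/-- On the brace `A = ℤ/p^n` with `a∘b = a + b + p^k a b` (the hypothesis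
`hgroup` says `(A,∘)` is indeed a group), the map `λ_z : b ↦ b + p^k z b` is
an automorphism of the multiplicative group `(A,∘)` if and only if `k = 0`,
or `2k ≥ n`, or `p^{n-2k}` divides `z`. -/
theorem stmt_19 (p n k : ℕ) (hp : p.Prime)
    (hgroup : ∀ a : ZMod (p ^ n), IsUnit (1 + (p : ZMod (p ^ n)) ^ k * a))
    (z : ZMod (p ^ n)) :
    (Function.Bijective (fun b : ZMod (p ^ n) => b + (p : ZMod (p ^ n)) ^ k * z * b) ∧
      ∀ a b : ZMod (p ^ n),
        (fun b : ZMod (p ^ n) => b + (p : ZMod (p ^ n)) ^ k * z * b)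
            (a + b + (p : ZMod (p ^ n)) ^ k * a * b) =
          (fun b : ZMod (p ^ n) => b + (p : ZMod (p ^ n)) ^ k * z * b) a +
            (fun b : ZMod (p ^ n) => b + (p : ZMod (p ^ n)) ^ k * z * b) b +
            (p : ZMod (p ^ n)) ^ k *
              ((fun b : ZMod (p ^ n) => b + (p : ZMod (p ^ n)) ^ k * z * b) a) *
              ((fun b : ZMod (p ^ n) => b + (p : ZMod (p ^ n)) ^ k * z * b) b)) ↔
    (k = 0 ∨ n ≤ 2 * k ∨ (p : ZMod (p ^ n)) ^ (n - 2 * k) ∣ z) := by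
  set c : ZMod (p ^ n) := (p : ZMod (p ^ n)) ^ k * z with hc
  have hu : IsUnit (1 + c) := hgroup z
  have hbij : Function.Bijective (fun b : ZMod (p ^ n) => b + c * b) := by
    have : (fun b : ZMod (p ^ n) => b + c * b) = fun b => (1 + c) * b := by
      funext b; ring
    rw [this]
    exact (Units.mulLeft_bijective hu.unit)
  rw [← stmt19_aux p n k hp hgroup z]
  constructor
  · rintro ⟨-, hhom⟩
    have h := hhom 1 1
    simp only at h
    -- h : relation; reduce to p^(2k) z (1+c) = 0
    have key : (p : ZMod (p ^ n)) ^ (2 * k) * z * (1 + c) = 0 := by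
      have : (1 + 1 + (p:ZMod (p^n))^k * 1 * 1) + c * (1 + 1 + (p:ZMod (p^n))^k * 1 * 1)
          - ((1 + c * 1) + (1 + c * 1) + (p:ZMod (p^n))^k * (1 + c * 1) * (1 + c * 1)) = 0 := by
        rw [h]; ring
      calc (p : ZMod (p ^ n)) ^ (2 * k) * z * (1 + c)
          = -((1 + 1 + (p:ZMod (p^n))^k * 1 * 1) + c * (1 + 1 + (p:ZMod (p^n))^k * 1 * 1)
            - ((1 + c * 1) + (1 + c * 1) + (p:ZMod (p^n))^k * (1 + c * 1) * (1 + c * 1))) := by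
            rw [hc]; ring
        _ = 0 := by rw [this, neg_zero]
    exact hu.mul_right_cancel (by rw [zero_mul]; exact key)
  · intro h
    refine ⟨hbij, fun a b => ?_⟩
    simp only
    have key : (p : ZMod (p ^ n)) ^ (2 * k) * z * (a * b) * (1 + c) = 0 := by
      rw [h, zero_mul, zero_mul]
    calc (a + b + (p:ZMod (p^n))^k * a * b) + c * (a + b + (p:ZMod (p^n))^k * a * b)
        = ((a + c * a) + (b + c * b) + (p:ZMod (p^n))^k * (a + c * a) * (b + c * b))
          - (p : ZMod (p ^ n)) ^ (2 * k) * z * (a * b) * (1 + c) := by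
          rw [hc]; ring
      _ = _ := by rw [key, sub_zero]
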